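/- The Fourier transform of a continuous, integrable, nonnegative function g : ℝ² → ℝ₊ which is not identically 0 is strictly positive definite; that is, for any n ≥ 1 and any pairwise distinct points x_1,…,x_n ∈ ℝ², the matrix (ĝ(x_i − x_j))_{1≤i,j≤n} is positive definite. -/

import Mathlib

open MeasureTheory
open scoped ComplexOrder

/-- The Fourier transform of a function `g : ℝ² → ℝ`, with the convention
`ĝ(ξ) = (1/4π²) ∫ e^{−i⟨ξ,x⟩} g(x) dx`. -/
noncomputable def fourierTransform2 (g : EuclideanSpace ℝ (Fin 2) → ℝ)
    (ξ : EuclideanSpace ℝ (Fin 2)) : ℂ :=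
  (1 / (4 * Real.pi ^ 2) : ℝ) *
    ∫ x : EuclideanSpace ℝ (Fin 2),
      Complex.exp (-Complex.I * (inner ℝ ξ x : ℝ)) * (g x : ℂ)

abbrev E2 := EuclideanSpace ℝ (Fin 2)

noncomputable def char (w : E2) : Multiplicative E2 →* ℂ where
  toFun y := Complex.exp (Complex.I * ((inner ℝ w (Multiplicative.toAdd y) : ℝ) : ℂ))
  map_one' := by simp
  map_mul' y z := by
    simp only [← Complex.exp_add]
    rw [show Multiplicative.toAdd (y * z) = Multiplicative.toAdd y + Multiplicative.toAdd z from rfl,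
      inner_add_right]
    push_cast
    ring_nf

lemma char_injective : Function.Injective char := by
  intro w w' h
  by_contra hne
  have hww' : w - w' ≠ 0 := sub_ne_zero.mpr hne
  have hn0 : ‖w - w'‖ ≠ 0 := norm_ne_zero_iff.mpr hww'
  have hr : (0:ℝ) < ‖w - w'‖^2 := by positivity
  set t := Real.pi / ‖w - w'‖^2 with ht
  have h1 := congrFun (congrArg DFunLike.coe h) (Multiplicative.ofAdd (t • (w - w')))
  simp only [char, MonoidHom.coe_mk, OneHom.coe_mk, toAdd_ofAdd] at h1
  have h2 : Complex.exp (Complex.I * ((inner ℝ w (t • (w - w')) : ℝ) : ℂ) -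
      Complex.I * ((inner ℝ w' (t • (w - w')) : ℝ) : ℂ)) = 1 := by
    rw [Complex.exp_sub, h1, div_self (Complex.exp_ne_zero _)]
  have h3 : (inner ℝ w (t • (w - w')) : ℝ) - (inner ℝ w' (t • (w - w')) : ℝ) = Real.pi := by
    rw [← inner_sub_left, real_inner_smul_right, real_inner_self_eq_norm_sq, ht]
    field_simp
  rw [show Complex.I * ((inner ℝ w (t • (w - w')) : ℝ) : ℂ) -
      Complex.I * ((inner ℝ w' (t • (w - w')) : ℝ) : ℂ) =
      Complex.I * (((inner ℝ w (t • (w - w')) : ℝ) : ℂ) - ((inner ℝ w' (t • (w - w')) : ℝ) : ℂ)) by ring,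
    ← Complex.ofReal_sub, h3, mul_comm, Complex.exp_pi_mul_I] at h2
  norm_num at h2

lemma coeffs_eq_zero {n : ℕ} (x : Fin n → E2) (hinj : Function.Injective x)
    (v : Fin n → ℂ)
    (h : ∀ y : E2, ∑ j, v j * Complex.exp (Complex.I * ((inner ℝ (x j) y : ℝ) : ℂ)) = 0) :
    v = 0 := by
  have li : LinearIndependent ℂ (fun j : Fin n => (char (x j) : Multiplicative E2 → ℂ)) :=
    (linearIndependent_monoidHom (Multiplicative E2) ℂ).comp (fun j => char (x j))
      (char_injective.comp hinj)
  have hz : (∑ j, v j • (char (x j) : Multiplicative E2 → ℂ)) = 0 := by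
    funext y
    have := h (Multiplicative.toAdd y)
    simpa [char, Finset.sum_apply] using this
  have := Fintype.linearIndependent_iff.mp li v hz
  funext i; exact this i

lemma H_analytic {n : ℕ} (x : Fin n → E2) (v : Fin n → ℂ) :
    AnalyticOnNhd ℝ
      (fun y : E2 => ∑ j, v j * Complex.exp (Complex.I * ((inner ℝ (x j) y : ℝ) : ℂ)))
      Set.univ := by
  intro y _
  apply Finset.analyticAt_fun_sum
  intro j _
  apply AnalyticAt.mul analyticAt_const
  have hl : AnalyticAt ℝ (fun y : E2 => Complex.I * ((inner ℝ (x j) y : ℝ) : ℂ)) y := by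
    apply AnalyticAt.mul analyticAt_const
    exact (Complex.ofRealCLM.comp (innerSL ℝ (x j))).analyticAt y
  exact (analyticAt_cexp.restrictScalars).comp hl


lemma exp_norm_one (ξ y : E2) : ‖Complex.exp (-Complex.I * ((inner ℝ ξ y : ℝ) : ℂ))‖ = 1 := by
  rw [Complex.norm_exp]
  simp

lemma key_int {g : E2 → ℝ} (hint : Integrable g) (ξ : E2) :
    Integrable (fun y : E2 => Complex.exp (-Complex.I * ((inner ℝ ξ y : ℝ) : ℂ)) * (g y : ℂ)) := by
  refine (hint.ofReal (𝕜 := ℂ)).bdd_mul ?_ (Filter.Eventually.of_forall fun y => le_of_eq (exp_norm_one ξ y))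
  exact (Complex.continuous_exp.comp
    (continuous_const.mul (Complex.continuous_ofReal.comp (innerSL ℝ ξ).continuous))).aestronglyMeasurable

lemma conj_ft (g : E2 → ℝ) (ξ : E2) :
    (starRingEnd ℂ) (fourierTransform2 g ξ) = fourierTransform2 g (-ξ) := by
  unfold fourierTransform2
  have h : ∀ y : E2, (starRingEnd ℂ)
      (Complex.exp (-Complex.I * ((inner ℝ ξ y : ℝ) : ℂ)) * ((g y : ℝ) : ℂ)) =
      Complex.exp (-Complex.I * ((inner ℝ (-ξ) y : ℝ) : ℂ)) * ((g y : ℝ) : ℂ) := by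
    intro y
    rw [map_mul, ← Complex.exp_conj]
    simp only [map_mul, map_neg, Complex.conj_I, Complex.conj_ofReal, inner_neg_left,
      Complex.ofReal_neg]
    ring_nf
  simp only [map_mul, ← integral_conj, h, Complex.conj_ofReal]

lemma quad_form {g : E2 → ℝ} (hint : Integrable g) {n : ℕ} (x : Fin n → E2) (v : Fin n → ℂ) :
    dotProduct (star v)
        ((Matrix.of fun i j : Fin n => fourierTransform2 g (x i - x j)).mulVec v)
      = ((1 / (4 * Real.pi ^ 2) : ℝ) : ℂ) *
        ((∫ y : E2, Complex.normSq
            (∑ j, v j * Complex.exp (Complex.I * ((inner ℝ (x j) y : ℝ) : ℂ))) * g y : ℝ) : ℂ) := by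
  set c : ℝ := 1 / (4 * Real.pi ^ 2) with hc
  set H : E2 → ℂ := fun y => ∑ j, v j * Complex.exp (Complex.I * ((inner ℝ (x j) y : ℝ) : ℂ))
    with hH
  set h : Fin n → Fin n → E2 → ℂ := fun i j y =>
    (starRingEnd ℂ) (v i) * v j *
      (Complex.exp (-Complex.I * ((inner ℝ (x i - x j) y : ℝ) : ℂ)) * ((g y : ℝ) : ℂ)) with hh
  have hInt : ∀ i j, Integrable (h i j) := fun i j => (key_int hint _).const_mul _
  have pointwise : ∀ y : E2, ∑ i, ∑ j, h i j y = ((Complex.normSq (H y) * g y : ℝ) : ℂ) := by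
    intro y
    have expand : ∀ i j : Fin n, h i j y =
        ((starRingEnd ℂ) (v i) * Complex.exp (-Complex.I * ((inner ℝ (x i) y : ℝ) : ℂ))) *
          ((v j * Complex.exp (Complex.I * ((inner ℝ (x j) y : ℝ) : ℂ))) * ((g y : ℝ) : ℂ)) := by
      intro i j
      rw [hh]
      simp only
      rw [inner_sub_left, Complex.ofReal_sub,
        show -Complex.I * (((inner ℝ (x i) y : ℝ) : ℂ) - ((inner ℝ (x j) y : ℝ) : ℂ)) =
          -Complex.I * ((inner ℝ (x i) y : ℝ) : ℂ) + Complex.I * ((inner ℝ (x j) y : ℝ) : ℂ)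
          by ring,
        Complex.exp_add]
      ring
    simp only [expand, ← Finset.mul_sum, ← Finset.sum_mul]
    have hconj : ∑ i, (starRingEnd ℂ) (v i) *
        Complex.exp (-Complex.I * ((inner ℝ (x i) y : ℝ) : ℂ)) = (starRingEnd ℂ) (H y) := by
      rw [hH]
      simp only [map_sum, map_mul, ← Complex.exp_conj, map_neg, Complex.conj_I,
        Complex.conj_ofReal, neg_mul]
    rw [hconj, Complex.ofReal_mul, Complex.normSq_eq_conj_mul_self]
    ring_nf
    simp only [hH]; ring
  have step1 : ∀ i j : Fin n,
      (starRingEnd ℂ) (v i) * (fourierTransform2 g (x i - x j) * v j) = (c : ℂ) * ∫ y, h i j y := by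
    intro i j
    unfold fourierTransform2
    rw [hh]
    simp only
    rw [integral_const_mul]
    ring
  have lhs_eq : dotProduct (star v)
      ((Matrix.of fun i j : Fin n => fourierTransform2 g (x i - x j)).mulVec v)
      = ∑ i, ∑ j, (starRingEnd ℂ) (v i) * (fourierTransform2 g (x i - x j) * v j) := by
    simp [dotProduct, Matrix.mulVec, Finset.mul_sum, RCLike.star_def, mul_assoc]
  rw [lhs_eq]
  simp only [step1]
  rw [show ∑ i, ∑ j, (c : ℂ) * ∫ y, h i j y = (c : ℂ) * ∑ i, ∑ j, ∫ y, h i j y by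
    simp [Finset.mul_sum]]
  congr 1
  have hsum : ∑ i, ∑ j, ∫ y, h i j y = ∫ y, ∑ i, ∑ j, h i j y := by
    rw [integral_finset_sum _ (fun i _ => integrable_finset_sum _ (fun j _ => hInt i j))]
    exact Finset.sum_congr rfl fun i _ => (integral_finset_sum _ (fun j _ => hInt i j)).symm
  rw [hsum]
  exact (congrArg (fun f : E2 → ℂ => ∫ y, f y) (funext pointwise)).trans integral_ofReal


/-- The Fourier transform of a continuous, integrable, nonnegative function on `ℝ²`
which is not identically `0` is strictly positive definite: for any pairwise distinct
points `x_1, …, x_n`, the (Hermitian) matrix `(ĝ(x_i − x_j))_{i,j}` is positive definite. -/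
theorem stmt_4 (g : EuclideanSpace ℝ (Fin 2) → ℝ)
    (hcont : Continuous g) (hint : Integrable g) (hnonneg : ∀ x, 0 ≤ g x)
    (hne : g ≠ 0) (n : ℕ) (hn : 1 ≤ n) (x : Fin n → EuclideanSpace ℝ (Fin 2))
    (hinj : Function.Injective x) :
    (Matrix.of fun i j : Fin n => fourierTransform2 g (x i - x j)).PosDef := by
  refine Matrix.posDef_iff_dotProduct_mulVec.mpr ⟨?_, fun v hv => ?_⟩
  · ext i j
    rw [Matrix.conjTranspose_apply, Matrix.of_apply, Matrix.of_apply, RCLike.star_def, conj_ft,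
      neg_sub]
  · have hquad := quad_form hint x v
    rw [dotProduct] at hquad
    rw [show (dotProduct (star v)
        ((Matrix.of fun i j : Fin n => fourierTransform2 g (x i - x j)).mulVec v)) =
        ∑ i, star v i * ((Matrix.of fun i j : Fin n => fourierTransform2 g (x i - x j)).mulVec v) i
        from rfl, hquad]
    set H : E2 → ℂ := fun y => ∑ j, v j * Complex.exp (Complex.I * ((inner ℝ (x j) y : ℝ) : ℂ))
      with hH
    set φ : E2 → ℝ := fun y => Complex.normSq (H y) * g y with hφ
    have hH_cont : Continuous H := by
      apply continuous_finset_sum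
      intro j _
      exact continuous_const.mul (Complex.continuous_exp.comp
        (continuous_const.mul (Complex.continuous_ofReal.comp (innerSL ℝ (x j)).continuous)))
    have hφ_cont : Continuous φ := (Complex.continuous_normSq.comp hH_cont).mul hcont
    have hφ_nonneg : ∀ y, 0 ≤ φ y := fun y =>
      mul_nonneg (Complex.normSq_nonneg _) (hnonneg y)
    have hφ_int : Integrable φ := by
      refine hint.bdd_mul (Complex.continuous_normSq.comp hH_cont).aestronglyMeasurable
        (c := (∑ j, ‖v j‖) ^ 2) (Filter.Eventually.of_forall fun y => ?_)
      rw [Real.norm_eq_abs, _root_.abs_of_nonneg (Complex.normSq_nonneg _), Complex.normSq_eq_norm_sq]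
      refine pow_le_pow_left₀ (norm_nonneg _) ?_ 2
      calc ‖H y‖ ≤ ∑ j, ‖v j * Complex.exp
            (Complex.I * ((inner ℝ (x j) y : ℝ) : ℂ))‖ := by
            rw [hH]; exact norm_sum_le _ _
        _ = ∑ j, ‖v j‖ := by
            refine Finset.sum_congr rfl fun j _ => ?_
            rw [norm_mul, Complex.norm_exp]
            simp
    have hsupp : (Function.support φ).Nonempty := by
      by_contra hempty
      rw [Set.not_nonempty_iff_eq_empty, Function.support_eq_empty_iff] at hempty
      have hzero : ∀ y : E2, g y ≠ 0 → H y = 0 := by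
        intro y hy
        have : φ y = 0 := congrFun hempty y
        rw [hφ] at this
        simp only at this
        rcases mul_eq_zero.mp this with h1 | h1
        · exact Complex.normSq_eq_zero.mp h1
        · exact absurd h1 hy
      obtain ⟨y₀, hy₀⟩ := Function.ne_iff.mp hne
      have hU : IsOpen {y : E2 | g y ≠ 0} := isOpen_compl_singleton.preimage hcont
      have hev : H =ᶠ[nhds y₀] 0 :=
        Filter.eventually_of_mem (hU.mem_nhds hy₀) (fun y hy => hzero y hy)
      have hEq : Set.EqOn H 0 Set.univ :=
        (H_analytic x v).eqOn_zero_of_preconnected_of_eventuallyEq_zero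
          isPreconnected_univ (Set.mem_univ y₀) hev
      exact hv (coeffs_eq_zero x hinj v (fun y => hEq (Set.mem_univ y)))
    have hipos : 0 < ∫ y, φ y :=
      (integral_pos_iff_support_of_nonneg hφ_nonneg hφ_int).mpr
        ((hφ_cont.isOpen_support).measure_pos volume hsupp)
    rw [← Complex.ofReal_mul]
    exact Complex.zero_lt_real.mpr (by positivity)
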